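/- arXiv:1908.02266 — 3 statements merged into one kernel-verified Lean document; each statement's English description precedes it below -/
import Mathlib

section
/- Let c = (3 - √5)/2. For all real numbers θ₊ ≤ 0, θ₋ ≥ 0 (not both zero) one has -(θ₊ + θ₋)²/(2 - c) + θ₊² + θ₋² - c(θ₊ - θ₋)² ≥ 0. -/
theorem stmt_1 (c : ℝ) (hc : c = (3 - Real.sqrt 5) / 2) :
    ∀ θp θm : ℝ, θp ≤ 0 → 0 ≤ θm → ¬(θp = 0 ∧ θm = 0) →
      -(θp + θm) ^ 2 / (2 - c) + θp ^ 2 + θm ^ 2 - c * (θp - θm) ^ 2 ≥ 0 := by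
  intro θp θm hp hm _
  have h5 : Real.sqrt 5 ^ 2 = 5 := Real.sq_sqrt (by norm_num)
  have hlt : Real.sqrt 5 < 3 := by
    nlinarith [Real.sqrt_nonneg 5]
  have hgt : (1:ℝ) < Real.sqrt 5 := by
    nlinarith [Real.sqrt_nonneg 5]
  have hcpos : 0 < c := by rw [hc]; linarith
  have hden : 0 < 2 - c := by rw [hc]; linarith
  have hc2 : c ^ 2 = 3 * c - 1 := by rw [hc]; nlinarith
  rw [ge_iff_le, ← sub_nonneg, sub_zero, div_add' _ _ _ (ne_of_gt hden),
    div_add' _ _ _ (ne_of_gt hden), div_sub' (ne_of_gt hden)]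
  apply div_nonneg _ (le_of_lt hden)
  nlinarith [mul_nonpos_of_nonpos_of_nonneg hp hm, hcpos]
end

section
/- Let c = (3 - √5)/2. For all real T, θ₊ ≤ 0, θ₋ ≥ 0, one has (2 - c)T² - 2|T|·|θ₊ + θ₋| + θ₊² + θ₋² - c(θ₊ - θ₋)² ≥ 0. -/
theorem stmt_2 (c : ℝ) (hc : c = (3 - Real.sqrt 5) / 2) :
    ∀ T θp θm : ℝ, θp ≤ 0 → 0 ≤ θm →
      (2 - c) * T ^ 2 - 2 * |T| * |θp + θm| + θp ^ 2 + θm ^ 2 - c * (θp - θm) ^ 2 ≥ 0 := by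
  have h5 : Real.sqrt 5 ^ 2 = 5 := Real.sq_sqrt (by norm_num)
  have h5pos : 0 < Real.sqrt 5 := Real.sqrt_pos.mpr (by norm_num)
  have h5lt : Real.sqrt 5 < 3 := by nlinarith
  have hc2 : c ^ 2 - 3 * c + 1 = 0 := by subst hc; nlinarith
  have h2c : 0 < 2 - c := by subst hc; nlinarith
  intro T θp θm hp hm
  have hpm : θp * θm ≤ 0 := mul_nonpos_of_nonpos_of_nonneg hp hm
  have key : 0 ≤ (2 - c) * ((2 - c) * T ^ 2 - 2 * |T| * |θp + θm| + θp ^ 2 + θm ^ 2 - c * (θp - θm) ^ 2) := by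
    nlinarith [sq_nonneg ((2 - c) * |T| - |θp + θm|), sq_abs T, sq_abs (θp + θm),
      mul_nonneg (sq_nonneg (c - 1)) (neg_nonneg.mpr hpm)]
  nlinarith [key]
end

section
/- If for a Schrödinger operator L = -d²/dx² - t²V(x) on (a, ∞) with Dirichlet condition at a the quadratic form Q(u) = ∫_a^∞ (u'² - t²Vu²) dx is nonnegative on all Lipschitz test functions vanishing at a and eventually zero, and if lim sup_{x→∞} x·∫_x^∞ V(s) ds = A ∈ (0, ∞) with V ≥ 0 integrable, then t² A ≤ 1. -/
set_option linter.unusedSectionVars false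
open MeasureTheory Filter Set

noncomputable def tent (a b c d x : ℝ) : ℝ :=
  max 0 (min (min ((x - a) / (b - a)) 1) ((d - x) / (d - c)))

section tent
variable {a b c d : ℝ} (hab : a < b) (hbc : b < c) (hcd : c < d)
include hab hbc hcd

lemma tent_eq_left {x : ℝ} (hx : x ∈ Set.Ioo a b) :
    tent a b c d x = (x - a) / (b - a) := by
  have h1 : (0:ℝ) < (x - a) / (b - a) := by
    apply div_pos <;> linarith [hx.1, hx.2]
  have h2 : (x - a) / (b - a) < 1 := by
    rw [div_lt_one (by linarith [hx.2] : (0:ℝ) < b - a)]; linarith [hx.2]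
  have h3 : (1:ℝ) < (d - x) / (d - c) := by
    rw [lt_div_iff₀ (by linarith : (0:ℝ) < d - c)]; nlinarith [hx.2]
  unfold tent
  rw [min_eq_left h2.le, min_eq_left (le_of_lt (h2.trans h3)), max_eq_right h1.le]

lemma tent_eq_one {x : ℝ} (hx : x ∈ Set.Icc b c) :
    tent a b c d x = 1 := by
  have h1 : (1:ℝ) ≤ (x - a) / (b - a) := by
    rw [le_div_iff₀ (by linarith : (0:ℝ) < b - a)]; linarith [hx.1]
  have h3 : (1:ℝ) ≤ (d - x) / (d - c) := by
    rw [le_div_iff₀ (by linarith : (0:ℝ) < d - c)]; linarith [hx.2]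
  unfold tent
  rw [min_eq_right h1, min_eq_left h3, max_eq_right zero_le_one]

lemma tent_eq_right {x : ℝ} (hx : x ∈ Set.Ioo c d) :
    tent a b c d x = (d - x) / (d - c) := by
  have h1 : (1:ℝ) ≤ (x - a) / (b - a) := by
    rw [le_div_iff₀ (by linarith : (0:ℝ) < b - a)]; linarith [hx.1]
  have h2 : (0:ℝ) < (d - x) / (d - c) := by
    apply div_pos <;> linarith [hx.2]
  have h3 : (d - x) / (d - c) < 1 := by
    rw [div_lt_one (by linarith : (0:ℝ) < d - c)]; linarith [hx.1]
  unfold tent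
  rw [min_eq_right h1, min_eq_right h3.le, max_eq_right h2.le]

lemma tent_eq_zero {x : ℝ} (hx : d ≤ x) : tent a b c d x = 0 := by
  have h3 : (d - x) / (d - c) ≤ 0 :=
    div_nonpos_of_nonpos_of_nonneg (by linarith) (by linarith)
  unfold tent
  rw [max_eq_left ((min_le_right _ _).trans h3)]

lemma tent_a : tent a b c d a = 0 := by
  have h3 : (0:ℝ) ≤ (d - a) / (d - c) := by
    apply div_nonneg <;> linarith
  unfold tent
  rw [sub_self, zero_div, min_eq_left zero_le_one, min_eq_left h3, max_self]

lemma tent_lipschitz : ∃ K, LipschitzWith K (tent a b c d) := by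
  have hba : (b : ℝ) - a ≠ 0 := by intro h; linarith [sub_pos.2 hab]
  have hdc : (d : ℝ) - c ≠ 0 := by intro h; linarith [sub_pos.2 hcd]
  have h1 : LipschitzWith (b-a)⁻¹.toNNReal (fun x => (x - a) / (b - a)) := by
    apply LipschitzWith.of_dist_le_mul
    intro x y
    rw [Real.dist_eq, Real.dist_eq]
    have : (x - a) / (b - a) - (y - a) / (b - a) = (x - y) / (b-a) := by
      field_simp; ring
    rw [this, abs_div, abs_of_pos (by linarith : (0:ℝ) < b - a),
      Real.coe_toNNReal _ (by rw [inv_nonneg]; linarith), div_eq_inv_mul]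
  have h3 : LipschitzWith (d-c)⁻¹.toNNReal (fun x => (d - x) / (d - c)) := by
    apply LipschitzWith.of_dist_le_mul
    intro x y
    rw [Real.dist_eq, Real.dist_eq]
    have : (d - x) / (d - c) - (d - y) / (d - c) = (y - x) / (d-c) := by
      field_simp; ring
    rw [this, abs_div, abs_of_pos (by linarith : (0:ℝ) < d - c),
      Real.coe_toNNReal _ (by rw [inv_nonneg]; linarith), div_eq_inv_mul, abs_sub_comm]
  exact ⟨_, (LipschitzWith.const' (K := 0) 0).max (((h1.min (LipschitzWith.const' (K := 0) 1))).min h3)⟩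

lemma tent_nonneg' (x : ℝ) : 0 ≤ tent a b c d x := le_max_left _ _

lemma tent_le_one' (x : ℝ) : tent a b c d x ≤ 1 :=
  max_le zero_le_one (((min_le_left _ _).trans (min_le_right _ _)))

end tent

section deriv
variable {a b c d : ℝ} (hab : a < b) (hbc : b < c) (hcd : c < d)
include hab hbc hcd

lemma tent_deriv_left {x : ℝ} (hx : x ∈ Set.Ioo a b) :
    deriv (tent a b c d) x = (b - a)⁻¹ := by
  have h : tent a b c d =ᶠ[nhds x] fun y => (y - a) / (b - a) :=
    Filter.eventuallyEq_of_mem (isOpen_Ioo.mem_nhds hx)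
      (fun y hy => tent_eq_left hab hbc hcd hy)
  have hd : HasDerivAt (fun y : ℝ => (y - a) / (b - a)) (1 / (b - a)) x :=
    ((hasDerivAt_id x).sub_const a).div_const (b - a)
  rw [h.deriv_eq, hd.deriv, one_div]

lemma tent_deriv_mid {x : ℝ} (hx : x ∈ Set.Ioo b c) :
    deriv (tent a b c d) x = 0 := by
  have h : tent a b c d =ᶠ[nhds x] fun _ => (1:ℝ) :=
    Filter.eventuallyEq_of_mem (isOpen_Ioo.mem_nhds hx)
      (fun y hy => tent_eq_one hab hbc hcd ⟨hy.1.le, hy.2.le⟩)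
  rw [h.deriv_eq, deriv_const]

lemma tent_deriv_right {x : ℝ} (hx : x ∈ Set.Ioo c d) :
    deriv (tent a b c d) x = -(d - c)⁻¹ := by
  have h : tent a b c d =ᶠ[nhds x] fun y => (d - y) / (d - c) :=
    Filter.eventuallyEq_of_mem (isOpen_Ioo.mem_nhds hx)
      (fun y hy => tent_eq_right hab hbc hcd hy)
  have hd : HasDerivAt (fun y : ℝ => (d - y) / (d - c)) (-1 / (d - c)) x :=
    ((hasDerivAt_id x).const_sub d).div_const (d - c)
  rw [h.deriv_eq, hd.deriv, neg_div, one_div]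

lemma tent_deriv_far {x : ℝ} (hx : x ∈ Set.Ioi d) :
    deriv (tent a b c d) x = 0 := by
  have h : tent a b c d =ᶠ[nhds x] fun _ => (0:ℝ) :=
    Filter.eventuallyEq_of_mem (isOpen_Ioi.mem_nhds hx)
      (fun y hy => tent_eq_zero hab hbc hcd (le_of_lt hy))
  rw [h.deriv_eq, deriv_const]

lemma tent_deriv_sq_integral :
    ∫ x in Set.Ioi a, deriv (tent a b c d) x ^ 2 = (b - a)⁻¹ + (d - c)⁻¹ := by
  obtain ⟨K, hK⟩ := tent_lipschitz hab hbc hcd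
  have hba : (b:ℝ) - a ≠ 0 := sub_ne_zero.2 (ne_of_gt hab)
  have hdc : (d:ℝ) - c ≠ 0 := sub_ne_zero.2 (ne_of_gt hcd)
  have hmeas : Measurable (deriv (tent a b c d)) := measurable_deriv _
  have hbd : ∀ x, ‖deriv (tent a b c d) x ^ 2‖ ≤ (K:ℝ)^2 := by
    intro x
    have := norm_deriv_le_of_lipschitz hK (x₀ := x)
    rw [Real.norm_eq_abs] at this ⊢
    rw [abs_pow]
    exact pow_le_pow_left₀ (abs_nonneg _) this 2
  have hIoc : ∀ u v : ℝ, IntegrableOn (fun x => deriv (tent a b c d) x ^ 2) (Set.Ioc u v) :=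
    fun u v => Measure.integrableOn_of_bounded (measure_Ioc_lt_top).ne
      ((hmeas.pow_const 2).aestronglyMeasurable) (Filter.Eventually.of_forall hbd)
  have hfar : Set.EqOn (fun x => deriv (tent a b c d) x ^ 2) (fun _ => (0:ℝ)) (Set.Ioi d) := by
    intro x hx; simp only; rw [tent_deriv_far hab hbc hcd hx]; ring
  have hIfar : IntegrableOn (fun x => deriv (tent a b c d) x ^ 2) (Set.Ioi d) := by
    rw [integrableOn_congr_fun hfar measurableSet_Ioi]
    exact integrableOn_zero
  have hint : ∀ u : ℝ, u < d → IntegrableOn (fun x => deriv (tent a b c d) x ^ 2) (Set.Ioi u) := by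
    intro u hu
    rw [← Set.Ioc_union_Ioi_eq_Ioi hu.le]
    exact (hIoc u d).union hIfar
  have split : ∀ u v : ℝ, u < v → v ≤ d →
      ∫ x in Set.Ioi u, deriv (tent a b c d) x ^ 2
      = (∫ x in Set.Ioc u v, deriv (tent a b c d) x ^ 2)
        + ∫ x in Set.Ioi v, deriv (tent a b c d) x ^ 2 := by
    intro u v huv hvd
    rw [← Set.Ioc_union_Ioi_eq_Ioi huv.le]
    rcases eq_or_lt_of_le hvd with h | h
    · subst h
      exact setIntegral_union (Set.Ioc_disjoint_Ioi le_rfl) measurableSet_Ioi (hIoc u v) hIfar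
    · exact setIntegral_union (Set.Ioc_disjoint_Ioi le_rfl) measurableSet_Ioi (hIoc u v)
        (hint v h)
  have e1 : ∫ x in Set.Ioc a b, deriv (tent a b c d) x ^ 2 = (b - a)⁻¹ := by
    have h : Set.EqOn (fun x => deriv (tent a b c d) x ^ 2)
        (fun _ => ((b - a)⁻¹)^2) (Set.Ioo a b) := by
      intro x hx; simp only; rw [tent_deriv_left hab hbc hcd hx]
    rw [integral_Ioc_eq_integral_Ioo, setIntegral_congr_fun measurableSet_Ioo h,
      setIntegral_const, Real.volume_real_Ioo_of_le (by linarith), smul_eq_mul,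
      sq, ← mul_assoc, mul_inv_cancel₀ hba, one_mul]
  have e2 : ∫ x in Set.Ioc b c, deriv (tent a b c d) x ^ 2 = 0 := by
    have h : Set.EqOn (fun x => deriv (tent a b c d) x ^ 2)
        (fun _ => (0:ℝ)) (Set.Ioo b c) := by
      intro x hx; simp only; rw [tent_deriv_mid hab hbc hcd hx]; ring
    rw [integral_Ioc_eq_integral_Ioo, setIntegral_congr_fun measurableSet_Ioo h]
    simp
  have e3 : ∫ x in Set.Ioc c d, deriv (tent a b c d) x ^ 2 = (d - c)⁻¹ := by
    have h : Set.EqOn (fun x => deriv (tent a b c d) x ^ 2)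
        (fun _ => ((d - c)⁻¹)^2) (Set.Ioo c d) := by
      intro x hx; simp only; rw [tent_deriv_right hab hbc hcd hx]; ring
    rw [integral_Ioc_eq_integral_Ioo, setIntegral_congr_fun measurableSet_Ioo h,
      setIntegral_const, Real.volume_real_Ioo_of_le (by linarith), smul_eq_mul,
      sq, ← mul_assoc, mul_inv_cancel₀ hdc, one_mul]
  have e4 : ∫ x in Set.Ioi d, deriv (tent a b c d) x ^ 2 = 0 := by
    rw [setIntegral_congr_fun measurableSet_Ioi hfar]
    simp
  rw [split a b hab (by linarith), split b c hbc (by linarith), split c d hcd le_rfl,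
    e1, e2, e3, e4]
  ring

end deriv

lemma tent_key {a b c d t : ℝ} {V : ℝ → ℝ} (hV : ∀ x, 0 ≤ V x)
    (hVint : IntegrableOn V (Set.Ioi a)) (hab : a < b) (hbc : b < c) (hcd : c < d)
    (hQ : 0 ≤ ∫ x in Set.Ioi a,
      (deriv (tent a b c d) x ^ 2 - t ^ 2 * V x * tent a b c d x ^ 2)) :
    t ^ 2 * ∫ x in Set.Ioc b c, V x ≤ (b - a)⁻¹ + (d - c)⁻¹ := by
  set u := tent a b c d with hu
  obtain ⟨K, hK⟩ := tent_lipschitz hab hbc hcd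
  have hucont : Continuous u := hK.continuous
  have hmeas : Measurable (deriv u) := measurable_deriv _
  -- integrability of derivative squared
  have hbd : ∀ x, ‖deriv u x ^ 2‖ ≤ (K:ℝ)^2 := by
    intro x
    have := norm_deriv_le_of_lipschitz hK (x₀ := x)
    rw [Real.norm_eq_abs] at this ⊢
    rw [abs_pow]
    exact pow_le_pow_left₀ (abs_nonneg _) this 2
  have hfar : Set.EqOn (fun x => deriv u x ^ 2) (fun _ => (0:ℝ)) (Set.Ioi d) := by
    intro x hx; simp only; rw [tent_deriv_far hab hbc hcd hx]; ring
  have hI1 : IntegrableOn (fun x => deriv u x ^ 2) (Set.Ioi a) := by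
    rw [← Set.Ioc_union_Ioi_eq_Ioi (by linarith : a ≤ d)]
    refine IntegrableOn.union ?_ ?_
    · exact Measure.integrableOn_of_bounded (measure_Ioc_lt_top).ne
        ((hmeas.pow_const 2).aestronglyMeasurable) (Filter.Eventually.of_forall hbd)
    · rw [integrableOn_congr_fun hfar measurableSet_Ioi]
      exact integrableOn_zero
  -- integrability of potential term
  have hI2 : IntegrableOn (fun x => t ^ 2 * V x * u x ^ 2) (Set.Ioi a) := by
    have h := hVint.bdd_mul (f := fun x => t ^ 2 * u x ^ 2)
      ((continuous_const.mul (hucont.pow 2)).aestronglyMeasurable) (c := t^2) (Filter.Eventually.of_forall fun x => by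
        rw [Real.norm_eq_abs, abs_mul, abs_pow, abs_pow, sq_abs]
        have h1 : |u x| ≤ 1 := by
          rw [abs_le]
          exact ⟨by linarith [tent_nonneg' hab hbc hcd x], tent_le_one' hab hbc hcd x⟩
        nlinarith [sq_nonneg t, abs_nonneg (u x), pow_le_one₀ (abs_nonneg (u x)) h1 (n := 2)])
    exact h.congr (Filter.Eventually.of_forall (fun x => by simp only; ring))
  -- split the quadratic form
  rw [integral_sub hI1 hI2] at hQ
  have hsplit : ∫ x in Set.Ioi a, t ^ 2 * V x * u x ^ 2
      = t ^ 2 * ∫ x in Set.Ioi a, V x * u x ^ 2 := by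
    rw [← integral_const_mul]
    congr 1; ext x; ring
  have hIVu : IntegrableOn (fun x => V x * u x ^ 2) (Set.Ioi a) := by
    have h := hVint.bdd_mul (f := fun x => u x ^ 2)
      ((hucont.pow 2).aestronglyMeasurable) (c := 1) (Filter.Eventually.of_forall fun x => by
        rw [Real.norm_eq_abs, abs_pow, sq_abs]
        have h0 := tent_nonneg' hab hbc hcd x
        have h1 := tent_le_one' hab hbc hcd x
        nlinarith)
    exact h.congr (Filter.Eventually.of_forall (fun x => by simp only; ring))
  -- lower bound for the potential integral
  have hmono : ∫ x in Set.Ioc b c, V x ≤ ∫ x in Set.Ioi a, V x * u x ^ 2 := by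
    have heq : ∫ x in Set.Ioc b c, V x = ∫ x in Set.Ioc b c, V x * u x ^ 2 := by
      refine setIntegral_congr_fun measurableSet_Ioc (fun x hx => ?_)
      rw [hu, tent_eq_one hab hbc hcd ⟨hx.1.le, hx.2⟩]
      ring
    rw [heq]
    refine setIntegral_mono_set hIVu ?_ ?_
    · refine Filter.Eventually.of_forall (fun x => ?_)
      have h0 := tent_nonneg' hab hbc hcd x
      exact mul_nonneg (hV x) (by positivity)
    · exact HasSubset.Subset.eventuallyLE (fun x hx => lt_trans hab hx.1)
  have hQ' : t ^ 2 * ∫ x in Set.Ioi a, V x * u x ^ 2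
      ≤ ∫ x in Set.Ioi a, deriv u x ^ 2 := by
    rw [← hsplit]; linarith
  calc t ^ 2 * ∫ x in Set.Ioc b c, V x
      ≤ t ^ 2 * ∫ x in Set.Ioi a, V x * u x ^ 2 :=
        mul_le_mul_of_nonneg_left hmono (sq_nonneg t)
    _ ≤ ∫ x in Set.Ioi a, deriv u x ^ 2 := hQ'
    _ = (b - a)⁻¹ + (d - c)⁻¹ := tent_deriv_sq_integral hab hbc hcd

theorem stmt_18 (a t A : ℝ) (V : ℝ → ℝ) (hV : ∀ x, 0 ≤ V x)
    (hVint : IntegrableOn V (Set.Ioi a))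
    (hA : limsup (fun x : ℝ => x * ∫ s in Set.Ioi x, V s) atTop = A)
    (hApos : 0 < A)
    (hQ : ∀ u : ℝ → ℝ, (∃ K, LipschitzWith K u) → u a = 0 →
      (∃ R, ∀ x ≥ R, u x = 0) →
      0 ≤ ∫ x in Set.Ioi a, (deriv u x ^ 2 - t ^ 2 * V x * u x ^ 2)) :
    t ^ 2 * A ≤ 1 := by
  have H : ∀ ε : ℝ, 0 < ε → t ^ 2 * A ≤ 1 + ε := by
    intro ε hε
    have ht2 : (0:ℝ) < t ^ 2 + 1 := by positivity
    set T := fun x : ℝ => ∫ s in Set.Ioi x, V s with hT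
    set δ₁ := ε / (4 * (t ^ 2 + 1)) with hδ₁
    have hδ₁pos : 0 < δ₁ := by positivity
    -- frequently large x with x * T x > A - δ₁
    have hcb : IsCoboundedUnder (· ≤ ·) atTop (fun x : ℝ => x * T x) := by
      refine isCoboundedUnder_le_of_eventually_le atTop (x := 0) ?_
      filter_upwards [eventually_ge_atTop (0:ℝ)] with x hx
      exact mul_nonneg hx (setIntegral_nonneg measurableSet_Ioi fun s _ => hV s)
    have hfreq : ∃ᶠ x in atTop, A - δ₁ < x * T x :=
      frequently_lt_of_lt_limsup hcb (by rw [hA]; linarith)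
    obtain ⟨b, hbA, hbN⟩ :=
      (hfreq.and_eventually (eventually_ge_atTop (max 1 (a + 1 + 4 * |a| / ε)))).exists
    have hb1 : (1:ℝ) ≤ b := le_trans (le_max_left _ _) hbN
    have hb0 : (0:ℝ) < b := lt_of_lt_of_le one_pos hb1
    have habs : 0 ≤ 4 * |a| / ε := by positivity
    have hbig : a + 1 + 4 * |a| / ε ≤ b := le_trans (le_max_right _ _) hbN
    have hba : a < b := by linarith
    have hfrac : b / (b - a) ≤ 1 + ε / 4 := by
      rcases le_or_gt a 0 with h | h
      · rw [div_le_iff₀ (by linarith)]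
        nlinarith
      · have habs' : |a| = a := abs_of_pos h
        rw [habs'] at hbig
        rw [div_le_iff₀ (by linarith)]
        have h4 : 4 * a ≤ ε * (b - a) := by
          have : ε * (b - a) ≥ ε * (1 + 4 * a / ε) := by
            apply mul_le_mul_of_nonneg_left _ hε.le
            linarith
          have he : ε * (1 + 4 * a / ε) = ε + 4 * a := by field_simp
          linarith
        nlinarith
    set δ₂ := ε / (4 * b * (t ^ 2 + 1)) with hδ₂
    have hδ₂pos : 0 < δ₂ := by positivity
    have htend : Tendsto (fun y => ∫ x in b..y, V x) atTop (nhds (T b)) :=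
      intervalIntegral_tendsto_integral_Ioi b
        (hVint.mono_set (Set.Ioi_subset_Ioi hba.le)) tendsto_id
    have hev : ∀ᶠ y in atTop, T b - δ₂ < ∫ x in b..y, V x :=
      htend.eventually (eventually_gt_nhds (by linarith))
    obtain ⟨c, hcI, hbc⟩ := (hev.and (eventually_gt_atTop b)).exists
    set d := c + 4 * b / ε with hd
    have hcd : c < d := by
      have : 0 < 4 * b / ε := by positivity
      rw [hd]; linarith
    have hQ' := hQ (tent a b c d) (tent_lipschitz hba hbc hcd) (tent_a hba hbc hcd)
      ⟨d, fun x hx => tent_eq_zero hba hbc hcd hx⟩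
    have hkey := tent_key hV hVint hba hbc hcd hQ'
    have hIoc : T b - δ₂ < ∫ x in Set.Ioc b c, V x := by
      rwa [intervalIntegral.integral_of_le hbc.le] at hcI
    set I := ∫ x in Set.Ioc b c, V x with hI
    -- arithmetic
    have hb_inv : b * (b - a)⁻¹ ≤ 1 + ε / 4 := by rw [← div_eq_mul_inv]; exact hfrac
    have hd_inv : b * (d - c)⁻¹ = ε / 4 := by
      rw [hd]
      have : c + 4 * b / ε - c = 4 * b / ε := by ring
      rw [this]
      field_simp
    have hδ₂b : t ^ 2 * b * δ₂ ≤ ε / 4 := by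
      have he : t ^ 2 * b * δ₂ = t ^ 2 / (t ^ 2 + 1) * (ε / 4) := by
        rw [hδ₂]; field_simp
      have hle : t ^ 2 / (t ^ 2 + 1) ≤ 1 := by
        rw [div_le_one ht2]; linarith
      rw [he]
      nlinarith
    have hδ₁t : t ^ 2 * δ₁ ≤ ε / 4 := by
      have he : t ^ 2 * δ₁ = t ^ 2 / (t ^ 2 + 1) * (ε / 4) := by
        rw [hδ₁, div_mul_div_comm, mul_div_assoc]; congr 1; ring
      have hle : t ^ 2 / (t ^ 2 + 1) ≤ 1 := by
        rw [div_le_one ht2]; linarith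
      rw [he]
      nlinarith
    have c1 : t ^ 2 * (A - δ₁) ≤ t ^ 2 * (b * T b) :=
      mul_le_mul_of_nonneg_left hbA.le (sq_nonneg t)
    have c2 : t ^ 2 * (b * T b) ≤ t ^ 2 * (b * (I + δ₂)) := by
      apply mul_le_mul_of_nonneg_left _ (sq_nonneg t)
      apply mul_le_mul_of_nonneg_left _ hb0.le
      linarith
    have c3 : b * (t ^ 2 * I) ≤ b * ((b - a)⁻¹ + (d - c)⁻¹) :=
      mul_le_mul_of_nonneg_left hkey hb0.le
    have e1 : t ^ 2 * (b * (I + δ₂)) = b * (t ^ 2 * I) + t ^ 2 * b * δ₂ := by ring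
    have e2 : b * ((b - a)⁻¹ + (d - c)⁻¹) = b * (b - a)⁻¹ + b * (d - c)⁻¹ := by ring
    have e3 : t ^ 2 * (A - δ₁) = t ^ 2 * A - t ^ 2 * δ₁ := by ring
    linarith
  by_contra hcon
  push_neg at hcon
  have := H ((t ^ 2 * A - 1) / 2) (by linarith)
  linarith
end
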